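/- For a piecewise causal curve β from p to q and a generalized time function τ: (1) L̂_τ(β) = 0 iff β is trivial (constant); (2) L̂_τ(β) = τ(q) − τ(p) iff β is future causal; (3) L̂_τ(β) ≥ max_{y∈β} τ(y) − min_{x∈β} τ(x) ≥ |τ(q) − τ(p)|. -/

import Mathlib

noncomputable section

open Set Manifold

namespace NullDist

variable (n : ℕ) (M : Type*) [TopologicalSpace M]
  [ChartedSpace (EuclideanSpace ℝ (Fin (n + 1))) M]
  [IsManifold (𝓡 (n + 1)) (⊤ : ℕ∞) M]

/-- A (time-oriented) Lorentzian metric on the `(n+1)`-manifold `M`: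
a symmetric bilinear form of signature `(−,+,⋯,+)` on each tangent space,
together with a continuous future-pointing timelike vector field `T`. -/
structure SpacetimeMetric : Type _ where
  g : ∀ x : M, TangentSpace (𝓡 (n + 1)) x →ₗ[ℝ] TangentSpace (𝓡 (n + 1)) x →ₗ[ℝ] ℝ
  symm : ∀ x u v, g x u v = g x v u
  lorentz : ∀ x : M, ∃ b : Module.Basis (Fin (n + 1)) ℝ (TangentSpace (𝓡 (n + 1)) x),
    ∀ i j, g x (b i) (b j) = if i = j then (if (i : ℕ) = 0 then (-1 : ℝ) else 1) else 0
  T : ∀ x : M, TangentSpace (𝓡 (n + 1)) x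
  T_timelike : ∀ x, g x (T x) (T x) < 0
  T_cont : Continuous fun x : M => (⟨x, T x⟩ : TangentBundle (𝓡 (n + 1)) M)

variable {n M}

/-- The velocity (one-sided at the endpoints) of a curve `γ : [a,b] → M`. -/
def vel (γ : ℝ → M) (a b s : ℝ) : TangentSpace (𝓡 (n + 1)) (γ s) :=
  mfderivWithin 𝓘(ℝ, ℝ) (𝓡 (n + 1)) γ (Icc a b) s (1 : ℝ)

namespace SpacetimeMetric

variable (L : SpacetimeMetric n M)

/-- `v` is a timelike vector at `x`. -/
def Timelike (x : M) (v : TangentSpace (𝓡 (n + 1)) x) : Prop := L.g x v v < 0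

/-- `v` is a future-pointing causal vector at `x` (the zero vector is allowed,
so that trivial curves count as causal). -/
def FutureVec (x : M) (v : TangentSpace (𝓡 (n + 1)) x) : Prop :=
  L.g x v v ≤ 0 ∧ (v = 0 ∨ L.g x (L.T x) v < 0)

/-- `v` is a past-pointing causal vector at `x`. -/
def PastVec (x : M) (v : TangentSpace (𝓡 (n + 1)) x) : Prop := L.FutureVec x (-v)

/-- `v` is a future-pointing timelike vector at `x`. -/
def FutureTimelikeVec (x : M) (v : TangentSpace (𝓡 (n + 1)) x) : Prop :=
  L.g x v v < 0 ∧ L.g x (L.T x) v < 0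

/-- `v` is a past-pointing timelike vector at `x`. -/
def PastTimelikeVec (x : M) (v : TangentSpace (𝓡 (n + 1)) x) : Prop :=
  L.FutureTimelikeVec x (-v)

/-- `γ` is a smooth future-directed causal curve on `[a,b]`. -/
def FutureCausalOn (γ : ℝ → M) (a b : ℝ) : Prop :=
  ContMDiffOn 𝓘(ℝ, ℝ) (𝓡 (n + 1)) (⊤ : ℕ∞) γ (Icc a b) ∧
  ∀ s ∈ Icc a b, L.FutureVec (γ s) (vel γ a b s)

/-- `γ` is a smooth past-directed causal curve on `[a,b]`. -/
def PastCausalOn (γ : ℝ → M) (a b : ℝ) : Prop :=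
  ContMDiffOn 𝓘(ℝ, ℝ) (𝓡 (n + 1)) (⊤ : ℕ∞) γ (Icc a b) ∧
  ∀ s ∈ Icc a b, L.PastVec (γ s) (vel γ a b s)

/-- `γ` is a smooth future-directed timelike curve on `[a,b]`. -/
def FutureTimelikeOn (γ : ℝ → M) (a b : ℝ) : Prop :=
  ContMDiffOn 𝓘(ℝ, ℝ) (𝓡 (n + 1)) (⊤ : ℕ∞) γ (Icc a b) ∧
  ∀ s ∈ Icc a b, L.FutureTimelikeVec (γ s) (vel γ a b s)

/-- `γ` is a smooth past-directed timelike curve on `[a,b]`. -/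
def PastTimelikeOn (γ : ℝ → M) (a b : ℝ) : Prop :=
  ContMDiffOn 𝓘(ℝ, ℝ) (𝓡 (n + 1)) (⊤ : ℕ∞) γ (Icc a b) ∧
  ∀ s ∈ Icc a b, L.PastTimelikeVec (γ s) (vel γ a b s)

/-- The causal relation `p ≤ q`, i.e. `q ∈ J⁺(p)`. -/
def CausalLE (p q : M) : Prop :=
  ∃ γ a b, a ≤ b ∧ L.FutureCausalOn γ a b ∧ γ a = p ∧ γ b = q

/-- The chronological relation `p ≪ q`, i.e. `q ∈ I⁺(p)`. -/
def ChronLT (p q : M) : Prop :=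
  ∃ γ a b, a < b ∧ L.FutureTimelikeOn γ a b ∧ γ a = p ∧ γ b = q

/-- `τ` is a generalized time function: it is nondecreasing along future causal
curves and strictly increasing along nontrivial (regular) future causal curves. -/
def IsGenTime (τ : M → ℝ) : Prop :=
  (∀ γ a b, L.FutureCausalOn γ a b → MonotoneOn (τ ∘ γ) (Icc a b)) ∧
  (∀ γ a b, L.FutureCausalOn γ a b → (∀ s ∈ Icc a b, vel (n := n) γ a b s ≠ 0) →
    StrictMonoOn (τ ∘ γ) (Icc a b))

/-- A piecewise causal structure on the curve `γ : [a,b] → M`: break points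
`s 0 = a < s 1 < ⋯ < s k = b` such that on each subinterval `γ` is a smooth,
regular, future or past directed causal curve.  (For `k = 0` this is the
trivial curve.) -/
structure PWC (γ : ℝ → M) (a b : ℝ) : Type _ where
  k : ℕ
  s : ℕ → ℝ
  mono : ∀ i < k, s i < s (i + 1)
  first : s 0 = a
  last : s k = b
  causal : ∀ i < k,
    L.FutureCausalOn γ (s i) (s (i + 1)) ∨ L.PastCausalOn γ (s i) (s (i + 1))
  regular : ∀ i < k, ∀ u ∈ Icc (s i) (s (i + 1)), vel (n := n) γ (s i) (s (i + 1)) u ≠ 0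

/-- The null length of a piecewise causal curve: the sum of the absolute changes
of `τ` along the causal pieces. -/
def nullLength (τ : M → ℝ) {γ : ℝ → M} {a b : ℝ} (P : L.PWC γ a b) : ℝ :=
  ∑ i ∈ Finset.range P.k, |τ (γ (P.s (i + 1))) - τ (γ (P.s i))|

/-- The null distance induced by `τ`: the infimum of the null lengths of
piecewise causal curves from `p` to `q`. -/
def nullDist (τ : M → ℝ) (p q : M) : ℝ :=
  sInf {r | ∃ (γ : ℝ → M) (a b : ℝ) (P : L.PWC γ a b),
    γ a = p ∧ γ b = q ∧ r = L.nullLength τ P}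


/-- Along a regular future causal piece, a generalized time function is strictly
increasing. -/
theorem strictMonoOn_of_future_aux {n : ℕ} {M : Type*} [TopologicalSpace M]
    [ChartedSpace (EuclideanSpace ℝ (Fin (n + 1))) M]
    [IsManifold (𝓡 (n + 1)) (⊤ : ℕ∞) M]
    (L : SpacetimeMetric n M) {τ : M → ℝ} (hτ : L.IsGenTime τ)
    {γ : ℝ → M} {c d : ℝ} (h : L.FutureCausalOn γ c d)
    (hreg : ∀ u ∈ Icc c d, vel (n := n) γ c d u ≠ 0) :
    StrictMonoOn (τ ∘ γ) (Icc c d) :=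
  hτ.2 γ c d h hreg

/-- Along a regular past causal piece, a generalized time function is strictly
decreasing (reverse the parametrization). -/
theorem strictAntiOn_of_past_aux {n : ℕ} {M : Type*} [TopologicalSpace M]
    [ChartedSpace (EuclideanSpace ℝ (Fin (n + 1))) M]
    [IsManifold (𝓡 (n + 1)) (⊤ : ℕ∞) M]
    (L : SpacetimeMetric n M) {τ : M → ℝ} (hτ : L.IsGenTime τ)
    {γ : ℝ → M} {c d : ℝ} (hcd : c < d) (h : L.PastCausalOn γ c d)
    (hreg : ∀ u ∈ Icc c d, vel (n := n) γ c d u ≠ 0) :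
    StrictAntiOn (τ ∘ γ) (Icc c d) := by
  set r : ℝ → ℝ := fun t => c + d - t with hrdef
  have hrr : ∀ t, r (r t) = t := by intro t; simp [hrdef]
  have hrmap : MapsTo r (Icc c d) (Icc c d) := by
    intro t ht
    exact ⟨by simp only [hrdef]; linarith [ht.2], by simp only [hrdef]; linarith [ht.1]⟩
  have hrsm : ContMDiff 𝓘(ℝ, ℝ) 𝓘(ℝ, ℝ) ⊤ r :=
    contMDiff_iff_contDiff.2 (contDiff_const.sub contDiff_id)
  have hud : UniqueMDiffOn 𝓘(ℝ, ℝ) (Icc c d) :=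
    (uniqueDiffOn_Icc hcd).uniqueMDiffOn
  have hγd : MDifferentiableOn 𝓘(ℝ, ℝ) (𝓡 (n + 1)) γ (Icc c d) :=
    h.1.mdifferentiableOn (by simp)
  have hrderiv : ∀ t ∈ Icc c d,
      mfderivWithin 𝓘(ℝ, ℝ) 𝓘(ℝ, ℝ) r (Icc c d) t (1 : ℝ) = (-1 : ℝ) := by
    intro t ht
    have hd : HasDerivAt r (-1 : ℝ) t := by
      simpa using (hasDerivAt_id t).const_sub (c + d)
    have h1 : mfderivWithin 𝓘(ℝ, ℝ) 𝓘(ℝ, ℝ) r (Icc c d) t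
        = fderivWithin ℝ r (Icc c d) t := mfderivWithin_eq_fderivWithin
    have h2 : fderivWithin ℝ r (Icc c d) t = (1 : ℝ →L[ℝ] ℝ).smulRight (-1 : ℝ) :=
      (hd.hasFDerivAt.hasFDerivWithinAt).fderivWithin ((uniqueDiffOn_Icc hcd) t ht)
    rw [h1, h2]
    exact one_smul ℝ (-1 : ℝ)
  have hvel : ∀ t ∈ Icc c d,
      vel (n := n) (γ ∘ r) c d t = - vel (n := n) γ c d (r t) := by
    intro t ht
    have h1 : mfderivWithin 𝓘(ℝ, ℝ) (𝓡 (n + 1)) (γ ∘ r) (Icc c d) t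
        = (mfderivWithin 𝓘(ℝ, ℝ) (𝓡 (n + 1)) γ (Icc c d) (r t)).comp
          (mfderivWithin 𝓘(ℝ, ℝ) 𝓘(ℝ, ℝ) r (Icc c d) t) :=
      mfderivWithin_comp t (hγd _ (hrmap ht))
        ((hrsm t).mdifferentiableAt (by simp)).mdifferentiableWithinAt hrmap (hud t ht)
    have key : vel (n := n) (γ ∘ r) c d t
        = mfderivWithin 𝓘(ℝ, ℝ) (𝓡 (n + 1)) γ (Icc c d) (r t)
            (mfderivWithin 𝓘(ℝ, ℝ) 𝓘(ℝ, ℝ) r (Icc c d) t (1 : ℝ)) := by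
      show mfderivWithin 𝓘(ℝ, ℝ) (𝓡 (n + 1)) (γ ∘ r) (Icc c d) t (1 : ℝ) = _
      rw [h1]; rfl
    rw [key, hrderiv t ht, show (-1 : ℝ) = -(1 : ℝ) from by norm_num]
    exact map_neg (mfderivWithin 𝓘(ℝ, ℝ) (𝓡 (n + 1)) γ (Icc c d) (r t)) (1 : ℝ)
  have hfut : L.FutureCausalOn (γ ∘ r) c d := by
    constructor
    · exact h.1.comp (hrsm.of_le le_top).contMDiffOn hrmap
    · intro t ht
      have := h.2 (r t) (hrmap ht)
      rw [hvel t ht]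
      exact this
  have hregf : ∀ u ∈ Icc c d, vel (n := n) (γ ∘ r) c d u ≠ 0 := by
    intro u hu
    rw [hvel u hu]
    simpa using hreg (r u) (hrmap hu)
  have hsm : StrictMonoOn (τ ∘ (γ ∘ r)) (Icc c d) := hτ.2 _ c d hfut hregf
  intro x hx y hy hxy
  have hry : r y ∈ Icc c d := hrmap hy
  have hrx : r x ∈ Icc c d := hrmap hx
  have : r y < r x := by simp only [hrdef]; linarith
  have := hsm hry hrx this
  simpa [Function.comp, hrr] using this

/-- Basic properties of the null length of a piecewise causal
curve `β` from `p` to `q`, for a generalized time function `τ`: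
(1) `L̂_τ(β) = 0` iff `β` is trivial (constant);
(2) `L̂_τ(β) = τ(q) − τ(p)` iff `β` is future causal (every piece is);
(3) `L̂_τ(β) ≥ max_{y∈β} τ(y) − min_{x∈β} τ(x) ≥ |τ(q) − τ(p)|`. -/
theorem nullLength_basic_properties {n : ℕ} {M : Type*} [TopologicalSpace M]
    [ChartedSpace (EuclideanSpace ℝ (Fin (n + 1))) M]
    [IsManifold (𝓡 (n + 1)) (⊤ : ℕ∞) M]
    (L : SpacetimeMetric n M) (τ : M → ℝ) (hτ : L.IsGenTime τ)
    (γ : ℝ → M) (a b : ℝ) (P : L.PWC γ a b) (p q : M)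
    (hp : γ a = p) (hq : γ b = q) :
    (L.nullLength τ P = 0 ↔ ∀ s ∈ Icc a b, γ s = p) ∧
    (L.nullLength τ P = τ q - τ p ↔
      ∀ i < P.k, L.FutureCausalOn γ (P.s i) (P.s (i + 1))) ∧
    ((∀ u ∈ Icc a b, ∀ v ∈ Icc a b, τ (γ u) - τ (γ v) ≤ L.nullLength τ P) ∧
      |τ q - τ p| ≤ L.nullLength τ P) := by
  classical
  set m : ℕ → ℝ := fun i => τ (γ (P.s i)) with hmdef
  have hL : L.nullLength τ P = ∑ i ∈ Finset.range P.k, |m (i + 1) - m i| := rfl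
  -- monotonicity of break points
  have hsmono : ∀ i l, i ≤ l → l ≤ P.k → P.s i ≤ P.s l := by
    intro i l hil
    induction l, hil using Nat.le_induction with
    | base => intro _; exact le_rfl
    | succ l hil ih =>
      intro hlk
      have hlk' : l < P.k := Nat.lt_of_succ_le hlk
      exact (ih hlk'.le).trans (P.mono l hlk').le
  have hsmem : ∀ i, i ≤ P.k → P.s i ∈ Icc a b := by
    intro i hi
    exact ⟨P.first.symm.trans_le (hsmono 0 i (Nat.zero_le _) hi),
      (hsmono i P.k hi le_rfl).trans_eq P.last⟩
  -- strict monotonicity / antitonicity on each piece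
  have hpiece : ∀ i < P.k, StrictMonoOn (τ ∘ γ) (Icc (P.s i) (P.s (i + 1))) ∨
      StrictAntiOn (τ ∘ γ) (Icc (P.s i) (P.s (i + 1))) := by
    intro i hi
    rcases P.causal i hi with hf | hpst
    · exact Or.inl (hτ.2 γ _ _ hf (P.regular i hi))
    · exact Or.inr (strictAntiOn_of_past_aux L hτ (P.mono i hi) hpst (P.regular i hi))
  have hmem1 : ∀ i < P.k, P.s i ∈ Icc (P.s i) (P.s (i + 1)) := by
    intro i hi; exact ⟨le_rfl, (P.mono i hi).le⟩
  have hmem2 : ∀ i < P.k, P.s (i + 1) ∈ Icc (P.s i) (P.s (i + 1)) := by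
    intro i hi; exact ⟨(P.mono i hi).le, le_rfl⟩
  have hΔpos : ∀ i < P.k, 0 < |m (i + 1) - m i| := by
    intro i hi
    rw [abs_pos, sub_ne_zero]
    rcases hpiece i hi with hsm | hsa
    · exact (hsm (hmem1 i hi) (hmem2 i hi) (P.mono i hi)).ne'
    · exact (hsa (hmem1 i hi) (hmem2 i hi) (P.mono i hi)).ne
  -- Part 1
  have part1 : L.nullLength τ P = 0 ↔ ∀ u ∈ Icc a b, γ u = p := by
    constructor
    · intro h0
      have hk0 : P.k = 0 := by
        by_contra hk0
        have h0lt : 0 < P.k := Nat.pos_of_ne_zero hk0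
        have := (Finset.sum_eq_zero_iff_of_nonneg
          (fun i _ => abs_nonneg (m (i + 1) - m i))).1 (hL ▸ h0) 0 (Finset.mem_range.2 h0lt)
        exact absurd this (ne_of_gt (hΔpos 0 h0lt))
      have hab : a = b := by
        have h := P.last
        rw [hk0] at h
        exact P.first.symm.trans h
      intro u hu
      have : u = a := le_antisymm (hab ▸ hu.2) hu.1
      rw [this, hp]
    · intro hconst
      rw [hL]
      apply Finset.sum_eq_zero
      intro i hi
      have hik : i < P.k := Finset.mem_range.1 hi
      have e1 : γ (P.s (i + 1)) = p := hconst _ (hsmem (i + 1) hik)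
      have e2 : γ (P.s i) = p := hconst _ (hsmem i hik.le)
      simp [hmdef, e1, e2]
  -- telescoping
  have htel : ∀ l, ∑ i ∈ Finset.range l, (m (i + 1) - m i) = m l - m 0 :=
    fun l => Finset.sum_range_sub m l
  have hm0 : m 0 = τ p := by rw [hmdef]; simp [P.first, hp]
  have hmk : m P.k = τ q := by rw [hmdef]; simp [P.last, hq]
  -- Part 2
  have part2 : L.nullLength τ P = τ q - τ p ↔
      ∀ i < P.k, L.FutureCausalOn γ (P.s i) (P.s (i + 1)) := by
    constructor
    · intro h2
      have hsum : ∑ i ∈ Finset.range P.k, (|m (i + 1) - m i| - (m (i + 1) - m i)) = 0 := by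
        rw [Finset.sum_sub_distrib, htel, hm0, hmk, ← hL, h2, sub_self]
      have hterm := (Finset.sum_eq_zero_iff_of_nonneg
        (fun i _ => sub_nonneg.2 (le_abs_self (m (i + 1) - m i)))).1 hsum
      intro i hi
      have hΔ : 0 ≤ m (i + 1) - m i := by
        have := hterm i (Finset.mem_range.2 hi)
        have habs : |m (i + 1) - m i| = m (i + 1) - m i := by linarith [sub_eq_zero.1 this]
        rw [← habs]; exact abs_nonneg _
      rcases P.causal i hi with hf | hpst
      · exact hf
      · exfalso
        have hsa := strictAntiOn_of_past_aux L hτ (P.mono i hi) hpst (P.regular i hi)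
        have := hsa (hmem1 i hi) (hmem2 i hi) (P.mono i hi)
        have : m (i + 1) < m i := this
        linarith
    · intro hfut
      have hΔ : ∀ i ∈ Finset.range P.k, |m (i + 1) - m i| = m (i + 1) - m i := by
        intro i hi
        have hik := Finset.mem_range.1 hi
        have hmono := hτ.1 γ _ _ (hfut i hik)
        have : m i ≤ m (i + 1) := hmono (hmem1 i hik) (hmem2 i hik) (P.mono i hik).le
        rw [abs_of_nonneg (sub_nonneg.2 this)]
      rw [hL, Finset.sum_congr rfl hΔ, htel, hm0, hmk]
  -- Part 3: bounds on values of τ along the curve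
  have hC' : ∀ l, l ≤ P.k → ∀ i, i ≤ l → |m l - m i| ≤ L.nullLength τ P := by
    intro l hl i hil
    have e1 : ∑ t ∈ Finset.Ico i l, (m (t + 1) - m t) = m l - m i := by
      rw [Finset.sum_Ico_eq_sub _ hil, htel, htel]; ring
    rw [← e1]
    calc |∑ t ∈ Finset.Ico i l, (m (t + 1) - m t)|
        ≤ ∑ t ∈ Finset.Ico i l, |m (t + 1) - m t| := Finset.abs_sum_le_sum_abs _ _
      _ ≤ ∑ t ∈ Finset.range P.k, |m (t + 1) - m t| := by
          apply Finset.sum_le_sum_of_subset_of_nonneg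
          · intro x hx
            rw [Finset.mem_range]
            exact lt_of_lt_of_le (Finset.mem_Ico.1 hx).2 hl
          · intro t _ _; exact abs_nonneg _
      _ = L.nullLength τ P := hL.symm
  have hC : ∀ i, i ≤ P.k → ∀ l, l ≤ P.k → m i - m l ≤ L.nullLength τ P := by
    intro i hi l hl
    rcases le_total l i with h | h
    · exact (le_abs_self _).trans (hC' i hi l h)
    · have := hC' l hl i h
      rw [abs_sub_comm] at this
      exact (le_abs_self _).trans this
  -- locating a point in a piece
  have hfind : ∀ t, t ≤ P.k → ∀ u, P.s 0 ≤ u → u ≤ P.s t →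
      u = P.s 0 ∨ ∃ j < t, u ∈ Icc (P.s j) (P.s (j + 1)) := by
    intro t
    induction t with
    | zero => intro _ u h1 h2; exact Or.inl (le_antisymm h2 h1)
    | succ t ih =>
      intro ht u h1 h2
      by_cases hcase : u ≤ P.s t
      · rcases ih (Nat.le_of_succ_le ht) u h1 hcase with h | ⟨j, hj, hu⟩
        · exact Or.inl h
        · exact Or.inr ⟨j, Nat.lt_succ_of_lt hj, hu⟩
      · exact Or.inr ⟨t, Nat.lt_succ_self t, ⟨(not_le.1 hcase).le, h2⟩⟩
  have hloc : ∀ u ∈ Icc a b, ∃ i ≤ P.k, ∃ l ≤ P.k, m l ≤ τ (γ u) ∧ τ (γ u) ≤ m i := by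
    intro u hu
    have h1 : P.s 0 ≤ u := P.first.le.trans hu.1
    have h2 : u ≤ P.s P.k := hu.2.trans P.last.ge
    rcases hfind P.k le_rfl u h1 h2 with h | ⟨j, hj, huj⟩
    · refine ⟨0, Nat.zero_le _, 0, Nat.zero_le _, ?_, ?_⟩ <;> rw [h] <;> exact le_rfl
    · rcases hpiece j hj with hsm | hsa
      · exact ⟨j + 1, hj, j, hj.le, hsm.monotoneOn (hmem1 j hj) huj huj.1,
          hsm.monotoneOn huj (hmem2 j hj) huj.2⟩
      · exact ⟨j, hj.le, j + 1, hj, hsa.antitoneOn huj (hmem2 j hj) huj.2,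
          hsa.antitoneOn (hmem1 j hj) huj huj.1⟩
  refine ⟨part1, part2, ?_, ?_⟩
  · intro u hu v hv
    obtain ⟨i, hi, -, -, -, hub⟩ := hloc u hu
    obtain ⟨-, -, l, hl, hlb, -⟩ := hloc v hv
    have := hC i hi l hl
    linarith
  · have h1 := hC P.k le_rfl 0 (Nat.zero_le _)
    have h2 := hC 0 (Nat.zero_le _) P.k le_rfl
    rw [hm0, hmk] at h1 h2
    rcases abs_cases (τ q - τ p) with ⟨he, -⟩ | ⟨he, -⟩ <;> rw [he] <;> linarith

end SpacetimeMetric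

end NullDist
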